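/- Let G be a graph that decomposes into a bipartite graph and a subgraph H with maximum degree Δ(H) ≤ 2 such that every vertex v with d_H(v) = 2 has d_G(v) even. If F : V(G) → 2^ℕ satisfies |F(v)| < d_G(v)/2 for all v, then G admits an F-avoiding orientation. -/

import Mathlib

attribute [local instance] Classical.propDecidable

/-- A loopless multigraph: edges indexed by `E` with endpoints in `Sym2 V`. -/
structure Multigraph (V E : Type) where
  ends : E → Sym2 V
  loopless : ∀ e, ¬ (ends e).IsDiag

namespace Multigraph

variable {V E : Type}

/-- Degree of a vertex: number of edges incident to it. -/
noncomputable def deg [Fintype E] (G : Multigraph V E) (v : V) : ℕ :=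
  (Finset.univ.filter fun e => v ∈ G.ends e).card

/-- Two vertices are adjacent if some edge joins them. -/
def Adj (G : Multigraph V E) (u v : V) : Prop :=
  u ≠ v ∧ ∃ e, G.ends e = s(u, v)

/-- An orientation assigns a tail and head to each edge, consistent with its endpoints. -/
structure Orientation (G : Multigraph V E) where
  tail : E → V
  head : E → V
  consistent : ∀ e, G.ends e = s(tail e, head e)

/-- Out-degree of a vertex in an orientation. -/
noncomputable def Orientation.outDeg [Fintype E] {G : Multigraph V E} (D : G.Orientation)
    (v : V) : ℕ :=
  (Finset.univ.filter fun e => D.tail e = v).card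

/-- An orientation is `F`-avoiding if no vertex has out-degree in its forbidden list. -/
def Orientation.Avoids [Fintype E] {G : Multigraph V E} (D : G.Orientation)
    (F : V → Finset ℕ) : Prop :=
  ∀ v, D.outDeg v ∉ F v

/-- Number of edges with both endpoints in `S`. -/
noncomputable def eIn [Fintype E] (G : Multigraph V E) (S : Finset V) : ℕ :=
  (Finset.univ.filter fun e => ∀ w ∈ G.ends e, w ∈ S).card

/-- Number of edges with exactly one endpoint in `S`. -/
noncomputable def cut [Fintype E] (G : Multigraph V E) (S : Finset V) : ℕ :=
  (Finset.univ.filter fun e => (∃ w ∈ G.ends e, w ∈ S) ∧ ¬ ∀ w ∈ G.ends e, w ∈ S).card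

/-- Reachability by directed paths in an orientation. -/
def Orientation.Reach {G : Multigraph V E} (D : G.Orientation) : V → V → Prop :=
  Relation.ReflTransGen fun a b => ∃ e, D.tail e = a ∧ D.head e = b

end Multigraph

set_option linter.unusedSectionVars false
set_option maxHeartbeats 1000000

open Finset MvPolynomial

namespace Stmt7Aux

variable {E : Type} [Fintype E]

/-- Indicator finsupp of a finset. -/
noncomputable def indd (T : Finset E) : E →₀ ℕ := ∑ e ∈ T, Finsupp.single e 1

lemma indd_apply (T : Finset E) (e : E) : indd T e = if e ∈ T then 1 else 0 := by
  classical
  rw [indd, Finsupp.finset_sum_apply]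
  simp [Finsupp.single_apply, Finset.sum_ite_eq' T e (fun _ => (1:ℕ))]

lemma indd_support (T : Finset E) : (indd T).support = T := by
  classical
  ext e
  simp [Finsupp.mem_support_iff, indd_apply]

lemma indd_degree (T : Finset E) : ∑ i ∈ (indd T).support, indd T i = T.card := by
  classical
  rw [indd_support]
  simp [indd_apply]

lemma indd_sum_of_disjoint {ι : Type*} (s : Finset ι) (T : ι → Finset E)
    (hdisj : ∀ u ∈ s, ∀ v ∈ s, u ≠ v → Disjoint (T u) (T v)) :
    indd (s.biUnion T) = ∑ v ∈ s, indd (T v) := by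
  classical
  induction s using Finset.induction_on with
  | empty => simp [indd]
  | @insert x s' hx ih =>
    rw [Finset.biUnion_insert, Finset.sum_insert hx, ← ih (fun u hu v hv huv =>
      hdisj u (Finset.mem_insert_of_mem hu) v (Finset.mem_insert_of_mem hv) huv)]
    have hd : Disjoint (T x) (s'.biUnion T) := by
      rw [Finset.disjoint_biUnion_right]
      intro v hv
      exact hdisj x (Finset.mem_insert_self x s') v (Finset.mem_insert_of_mem hv)
        (fun h => hx (h ▸ hv))
    rw [indd, indd, indd, ← Finset.sum_union hd]

/-- all coefficients nonnegative -/
def NonnegP (f : MvPolynomial E ℚ) : Prop := ∀ d, 0 ≤ coeff d f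

lemma nonnegP_one : NonnegP (1 : MvPolynomial E ℚ) := by
  intro d
  rw [MvPolynomial.coeff_one]
  split <;> norm_num

lemma nonnegP_mul {p q : MvPolynomial E ℚ} (hp : NonnegP p) (hq : NonnegP q) :
    NonnegP (p * q) := by
  intro d
  classical
  rw [coeff_mul]
  exact Finset.sum_nonneg fun x _ => mul_nonneg (hp x.1) (hq x.2)

lemma nonnegP_sumX (N : Finset E) : NonnegP (∑ e ∈ N, (X e : MvPolynomial E ℚ)) := by
  intro d
  classical
  rw [coeff_sum]
  refine Finset.sum_nonneg fun e _ => ?_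
  rw [coeff_X']
  split <;> norm_num

lemma nonnegP_pow {p : MvPolynomial E ℚ} (hp : NonnegP p) (k : ℕ) : NonnegP (p ^ k) := by
  induction k with
  | zero => simpa [pow_zero] using nonnegP_one
  | succ n ih => rw [pow_succ]; exact nonnegP_mul ih hp

lemma nonnegP_prod {ι : Type*} (s : Finset ι) (g : ι → MvPolynomial E ℚ)
    (h : ∀ v ∈ s, NonnegP (g v)) : NonnegP (∏ v ∈ s, g v) := by
  classical
  induction s using Finset.induction_on with
  | empty => simpa using nonnegP_one
  | @insert x s' hx ih =>
    rw [Finset.prod_insert hx]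
    exact nonnegP_mul (h x (Finset.mem_insert_self x s'))
      (ih fun v hv => h v (Finset.mem_insert_of_mem hv))

lemma coeff_mul_ge {p q : MvPolynomial E ℚ} (hp : NonnegP p) (hq : NonnegP q)
    (a b : E →₀ ℕ) : coeff a p * coeff b q ≤ coeff (a + b) (p * q) := by
  classical
  rw [coeff_mul]
  have hmem : ((a, b) : (E →₀ ℕ) × (E →₀ ℕ)) ∈ Finset.HasAntidiagonal.antidiagonal (a + b) :=
    Finset.HasAntidiagonal.mem_antidiagonal.mpr rfl
  exact Finset.single_le_sum (f := fun x : (E →₀ ℕ) × (E →₀ ℕ) => coeff x.1 p * coeff x.2 q)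
    (fun x _ => mul_nonneg (hp x.1) (hq x.2)) hmem

lemma coeff_pow_pos {N S : Finset E} (hSN : S ⊆ N) :
    0 < coeff (indd S) ((∑ e ∈ N, (X e : MvPolynomial E ℚ)) ^ S.card) := by
  classical
  induction S using Finset.induction_on with
  | empty =>
    simp only [indd, Finset.sum_empty, Finset.card_empty, pow_zero]
    rw [MvPolynomial.coeff_one]
    norm_num
  | @insert a S' ha ih =>
    have hS'N : S' ⊆ N := fun x hx => hSN (Finset.mem_insert_of_mem hx)
    have haN : a ∈ N := hSN (Finset.mem_insert_self a S')
    rw [Finset.card_insert_of_notMem ha, pow_succ]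
    have hind : indd (insert a S') = indd S' + Finsupp.single a 1 := by
      rw [indd, indd, Finset.sum_insert ha, add_comm]
    rw [hind]
    have h1 : coeff (Finsupp.single a 1) (∑ e ∈ N, (X e : MvPolynomial E ℚ)) = 1 := by
      rw [coeff_sum]
      have : ∀ e ∈ N, coeff (Finsupp.single a 1) (X e : MvPolynomial E ℚ)
          = if e = a then 1 else 0 := by
        intro e _
        rw [coeff_X']
        congr 1
        simp only [eq_iff_iff]
        constructor
        · intro h
          exact Finsupp.single_left_injective (one_ne_zero) h
        · intro h; rw [h]
      rw [Finset.sum_congr rfl this, Finset.sum_ite_eq' N a (fun _ => (1:ℚ))]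
      simp [haN]
    have := coeff_mul_ge (nonnegP_pow (nonnegP_sumX N) S'.card) (nonnegP_sumX N)
      (indd S') (Finsupp.single a 1)
    rw [h1, mul_one] at this
    exact lt_of_lt_of_le (ih hS'N) this

lemma coeff_prod_pos {V : Type} (Vr : Finset V) (N T : V → Finset E)
    (hTN : ∀ v ∈ Vr, T v ⊆ N v)
    (hdisj : ∀ u ∈ Vr, ∀ v ∈ Vr, u ≠ v → Disjoint (T u) (T v)) :
    0 < coeff (∑ v ∈ Vr, indd (T v))
      (∏ v ∈ Vr, (∑ e ∈ N v, (X e : MvPolynomial E ℚ)) ^ (T v).card) := by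
  classical
  induction Vr using Finset.induction_on with
  | empty =>
    simp only [Finset.sum_empty, Finset.prod_empty]
    rw [MvPolynomial.coeff_one]
    norm_num
  | @insert v Vr' hv ih =>
    rw [Finset.sum_insert hv, Finset.prod_insert hv]
    have ih' := ih (fun u hu => hTN u (Finset.mem_insert_of_mem hu))
      (fun u hu w hw huw =>
        hdisj u (Finset.mem_insert_of_mem hu) w (Finset.mem_insert_of_mem hw) huw)
    have hnnprod : NonnegP (∏ u ∈ Vr', (∑ e ∈ N u, (X e : MvPolynomial E ℚ)) ^ (T u).card) :=
      nonnegP_prod _ _ fun u _ => nonnegP_pow (nonnegP_sumX _) _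
    have := coeff_mul_ge (p := (∑ e ∈ N v, (X e : MvPolynomial E ℚ)) ^ (T v).card)
      (nonnegP_pow (nonnegP_sumX _) _) hnnprod (indd (T v)) (∑ u ∈ Vr', indd (T u))
    refine lt_of_lt_of_le ?_ this
    exact mul_pos (coeff_pow_pos (hTN v (Finset.mem_insert_self v Vr'))) ih'

lemma alt_sum (s : Finset E) :
    ∑ W ∈ s.powerset, (-1 : ℚ) ^ (s \ W).card = if s = ∅ then 1 else 0 := by
  classical
  have : ∑ W ∈ s.powerset, (-1 : ℚ) ^ (s \ W).card = ∑ W ∈ s.powerset, (-1 : ℚ) ^ W.card := by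
    refine Finset.sum_nbij' (fun W => s \ W) (fun W => s \ W) ?_ ?_ ?_ ?_ ?_
    · intro W hW; exact Finset.mem_powerset.mpr (Finset.sdiff_subset)
    · intro W hW; exact Finset.mem_powerset.mpr (Finset.sdiff_subset)
    · intro W hW; exact Finset.sdiff_sdiff_eq_self (Finset.mem_powerset.mp hW)
    · intro W hW; exact Finset.sdiff_sdiff_eq_self (Finset.mem_powerset.mp hW)
    · intro W hW; rfl
  rw [this]
  have h0 := Finset.sum_powerset_neg_one_pow_card (x := s)
  have h2 : ((∑ m ∈ s.powerset, (-1 : ℤ) ^ m.card : ℤ) : ℚ)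
      = ∑ m ∈ s.powerset, (-1 : ℚ) ^ m.card := by push_cast; rfl
  rw [← h2, h0]
  split <;> norm_num

/-- Key "finite differences" identity: specialization of the Combinatorial
Nullstellensatz to the grid {0,1}^E. -/
lemma diff_coeff (T : Finset E) (f : MvPolynomial E ℚ) (hdeg : f.totalDegree ≤ T.card) :
    ∑ U ∈ T.powerset, (-1 : ℚ) ^ (T \ U).card
        * eval (fun e => if e ∈ U then (1:ℚ) else 0) f
      = coeff (indd T) f := by
  classical
  have heval : ∀ U ∈ T.powerset, eval (fun e => if e ∈ U then (1:ℚ) else 0) f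
      = ∑ d ∈ f.support, coeff d f * (if d.support ⊆ U then 1 else 0) := by
    intro U _
    rw [MvPolynomial.eval_eq]
    refine Finset.sum_congr rfl fun d _ => ?_
    congr 1
    have : ∀ i ∈ d.support, (if i ∈ U then (1:ℚ) else 0) ^ d i = if i ∈ U then 1 else 0 := by
      intro i hi
      have hdi : d i ≠ 0 := Finsupp.mem_support_iff.mp hi
      split
      · exact one_pow _
      · exact zero_pow hdi
    rw [Finset.prod_congr rfl this, Finset.prod_boole]
    congr 1
  rw [Finset.sum_congr rfl (fun U hU => by rw [heval U hU])]
  rw [Finset.sum_congr rfl (fun U _ => Finset.mul_sum _ _ _), Finset.sum_comm]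
  have hinner : ∀ d ∈ f.support,
      (∑ U ∈ T.powerset, (-1:ℚ) ^ (T \ U).card * (coeff d f * (if d.support ⊆ U then 1 else 0)))
      = coeff d f * (if d = indd T then 1 else 0) := by
    intro d hd
    by_cases hsub : d.support ⊆ T
    · have key : (∑ U ∈ T.powerset, (-1:ℚ) ^ (T \ U).card * (if d.support ⊆ U then 1 else 0))
          = if d.support = T then 1 else 0 := by
        have h1 : ∑ U ∈ T.powerset, (-1:ℚ) ^ (T \ U).card * (if d.support ⊆ U then 1 else 0)
            = ∑ U ∈ T.powerset.filter (fun U => d.support ⊆ U), (-1:ℚ) ^ (T \ U).card := by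
          rw [Finset.sum_filter]
          refine Finset.sum_congr rfl fun U _ => ?_
          split <;> simp
        rw [h1]
        have h2 : ∑ U ∈ T.powerset.filter (fun U => d.support ⊆ U), (-1:ℚ) ^ (T \ U).card
            = ∑ W ∈ (T \ d.support).powerset, (-1:ℚ) ^ ((T \ d.support) \ W).card := by
          refine Finset.sum_nbij' (fun U => U \ d.support) (fun W => W ∪ d.support) ?_ ?_ ?_ ?_ ?_
          · intro U hU
            rw [Finset.mem_filter, Finset.mem_powerset] at hU
            exact Finset.mem_powerset.mpr (Finset.sdiff_subset_sdiff hU.1 (Finset.Subset.refl _))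
          · intro W hW
            rw [Finset.mem_powerset] at hW
            rw [Finset.mem_filter, Finset.mem_powerset]
            exact ⟨Finset.union_subset (hW.trans Finset.sdiff_subset) hsub,
              Finset.subset_union_right⟩
          · intro U hU
            rw [Finset.mem_filter] at hU
            exact Finset.sdiff_union_of_subset hU.2
          · intro W hW
            rw [Finset.mem_powerset] at hW
            ext x
            simp only [Finset.mem_sdiff, Finset.mem_union]
            constructor
            · rintro ⟨hx | hx, hxd⟩
              · exact hx
              · exact absurd hx hxd
            · intro hx
              exact ⟨Or.inl hx, (Finset.mem_sdiff.mp (hW hx)).2⟩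
          · intro U hU
            rw [Finset.mem_filter, Finset.mem_powerset] at hU
            have hxx : (T \ d.support) \ (U \ d.support) = T \ U := by
              ext x
              simp only [Finset.mem_sdiff]
              constructor
              · rintro ⟨⟨hxT, hxd⟩, h2⟩
                refine ⟨hxT, fun hxU => h2 ⟨hxU, hxd⟩⟩
              · rintro ⟨hxT, hxU⟩
                exact ⟨⟨hxT, fun h => hxU (hU.2 h)⟩, fun h => hxU h.1⟩
            rw [hxx]
        rw [h2, alt_sum]
        congr 1
        simp only [eq_iff_iff, Finset.sdiff_eq_empty_iff_subset]
        exact ⟨fun h => Finset.Subset.antisymm hsub h, fun h => h ▸ Finset.Subset.refl _⟩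
      calc ∑ U ∈ T.powerset, (-1:ℚ) ^ (T \ U).card * (coeff d f * (if d.support ⊆ U then 1 else 0))
          = coeff d f * ∑ U ∈ T.powerset, (-1:ℚ) ^ (T \ U).card * (if d.support ⊆ U then 1 else 0) := by
            rw [Finset.mul_sum]
            exact Finset.sum_congr rfl fun U _ => by ring
        _ = coeff d f * (if d.support = T then 1 else 0) := by rw [key]
        _ = coeff d f * (if d = indd T then 1 else 0) := by
            congr 1
            by_cases hds : d.support = T
            · rw [if_pos hds]
              have hone : ∀ i ∈ T, d i = 1 := by
                have hge : ∀ i ∈ T, 1 ≤ d i := by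
                  intro i hi
                  have : i ∈ d.support := hds ▸ hi
                  exact Nat.one_le_iff_ne_zero.mpr (Finsupp.mem_support_iff.mp this)
                have hsum : ∑ i ∈ T, d i ≤ T.card := by
                  have := MvPolynomial.le_totalDegree hd
                  calc ∑ i ∈ T, d i = d.sum fun _ e => e := by
                        rw [Finsupp.sum, hds]
                    _ ≤ f.totalDegree := this
                    _ ≤ T.card := hdeg
                by_contra hcon
                push_neg at hcon
                obtain ⟨i0, hi0T, hi0⟩ := hcon
                have h2le : 2 ≤ d i0 := by
                  have := hge i0 hi0T
                  omega
                have : T.card < ∑ i ∈ T, d i := by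
                  calc T.card = ∑ _i ∈ T, 1 := by simp
                    _ < ∑ i ∈ T, d i := Finset.sum_lt_sum hge ⟨i0, hi0T, by omega⟩
                omega
              have : d = indd T := by
                refine Finsupp.ext fun i => ?_
                rw [indd_apply]
                by_cases hiT : i ∈ T
                · rw [if_pos hiT]; exact hone i hiT
                · rw [if_neg hiT]
                  have : i ∉ d.support := fun h => hiT (hds ▸ h)
                  exact Finsupp.notMem_support_iff.mp this
              rw [if_pos this]
            · rw [if_neg hds, if_neg]
              intro h
              exact hds (h ▸ indd_support T)
    · have hne : d ≠ indd T := by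
        intro h
        rw [h, indd_support] at hsub
        exact hsub (Finset.Subset.refl _)
      rw [if_neg hne, mul_zero]
      refine Finset.sum_eq_zero fun U hU => ?_
      rw [if_neg (fun h => hsub (h.trans (Finset.mem_powerset.mp hU))), mul_zero, mul_zero]
  rw [Finset.sum_congr rfl hinner]
  simp only [mul_ite, mul_one, mul_zero]
  rw [Finset.sum_ite_eq' f.support (indd T) (fun d => coeff d f)]
  split
  · rfl
  · rename_i h
    exact (MvPolynomial.notMem_support_iff.mp h).symm

end Stmt7Aux



/-- decomposition into a bipartite graph and a subgraph H with Δ(H) ≤ 2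
whose degree-2 vertices have even degree in G. Here `EH` is the edge set of `H`. -/
theorem stmt7 {V E : Type} [Fintype E] (G : Multigraph V E) (EH : Finset E)
    (c : V → Bool)
    (hbip : ∀ e ∉ EH, ∃ a b : V, G.ends e = s(a, b) ∧ c a ≠ c b)
    (hH1 : ∀ v : V, (EH.filter fun e => v ∈ G.ends e).card ≤ 2)
    (hH2 : ∀ v : V, (EH.filter fun e => v ∈ G.ends e).card = 2 → Even (G.deg v))
    (F : V → Finset ℕ) (hF : ∀ v, 2 * (F v).card < G.deg v) :
    ∃ D : G.Orientation, D.Avoids F := by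
  
  classical
  -- choose oriented endpoint representations for every edge
  have hrep : ∀ z : Sym2 V, ∃ x y, z = s(x, y) := Sym2.ind fun x y => ⟨x, y, rfl⟩
  have hends : ∀ e : E, ∃ p : V × V, G.ends e = s(p.1, p.2) ∧ p.1 ≠ p.2 ∧
      (e ∉ EH → c p.1 = true ∧ c p.2 = false) := by
    intro e
    by_cases he : e ∈ EH
    · obtain ⟨x, y, hxy⟩ := hrep (G.ends e)
      refine ⟨(x, y), hxy, fun hxyeq => G.loopless e ?_, fun h => absurd he h⟩
      rw [hxy]
      exact Sym2.mk_isDiag_iff.mpr hxyeq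
    · obtain ⟨x, y, hxy, hcxy⟩ := hbip e he
      have hne : x ≠ y := fun h => hcxy (h ▸ rfl)
      cases hcx : c x with
      | true =>
        have hcy : c y = false := by
          cases hcy : c y with
          | true => exact absurd (hcx.trans hcy.symm) hcxy
          | false => rfl
        exact ⟨(x, y), hxy, hne, fun _ => ⟨hcx, hcy⟩⟩
      | false =>
        have hcy : c y = true := by
          cases hcy : c y with
          | true => rfl
          | false => exact absurd (hcx.trans hcy.symm) hcxy
        exact ⟨(y, x), by rw [hxy, Sym2.eq_swap], hne.symm, fun _ => ⟨hcy, hcx⟩⟩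
  choose p hp1 hp2 hp3 using hends
  set a : E → V := fun e => (p e).1 with ha_def
  set b : E → V := fun e => (p e).2 with hb_def
  have hp3' : ∀ e ∉ EH, c (a e) = true ∧ c (b e) = false := hp3
  have hp2' : ∀ e, a e ≠ b e := hp2
  have hmem : ∀ (e : E) (v : V), v ∈ G.ends e ↔ v = a e ∨ v = b e := by
    intro e v
    rw [hp1 e]
    exact Sym2.mem_iff
  -- the "bipartite" edges at v
  set NB : V → Finset E := fun v => Finset.univ.filter (fun e => e ∉ EH ∧ v ∈ G.ends e)
    with hNB_def
  have hNBmem : ∀ (v : V) (e : E), e ∈ NB v ↔ e ∉ EH ∧ v ∈ G.ends e := by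
    intro v e
    rw [hNB_def]
    simp only [Finset.mem_filter, Finset.mem_univ, true_and]
  have hdeg_split : ∀ v, G.deg v = (EH.filter fun e => v ∈ G.ends e).card + (NB v).card := by
    intro v
    have h1 : (Finset.univ.filter (fun e => v ∈ G.ends e)).filter (fun e => e ∈ EH)
        = EH.filter (fun e => v ∈ G.ends e) := by
      ext e
      simp only [Finset.mem_filter, Finset.mem_univ, true_and]
      tauto
    have h2 : (Finset.univ.filter (fun e => v ∈ G.ends e)).filter (fun e => ¬ e ∈ EH)
        = NB v := by
      ext e
      simp only [hNB_def, Finset.mem_filter, Finset.mem_univ, true_and]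
      tauto
    have h3 := Finset.card_filter_add_card_filter_not
      (s := Finset.univ.filter (fun e => v ∈ G.ends e)) (p := fun e => e ∈ EH)
    rw [h1, h2] at h3
    rw [Multigraph.deg, ← h3]
  have h2F : ∀ v, 2 * (F v).card ≤ (NB v).card := by
    intro v
    have h1 := hH1 v
    have h3 := hF v
    have hs := hdeg_split v
    by_cases h2 : (EH.filter fun e => v ∈ G.ends e).card = 2
    · obtain ⟨k, hk⟩ := hH2 v h2
      omega
    · omega
  -- relevant vertices form a finite set
  set Vrel : Finset V :=
    ((Finset.univ.image a) ∪ (Finset.univ.image b)).filter (fun v => (F v).Nonempty)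
    with hVrel_def
  have hVrel : ∀ v, (F v).Nonempty → v ∈ Vrel := by
    intro v hv
    refine Finset.mem_filter.mpr ⟨?_, hv⟩
    have hdpos : 0 < G.deg v := lt_of_le_of_lt (Nat.zero_le _) (hF v)
    rw [Multigraph.deg, Finset.card_pos] at hdpos
    obtain ⟨e, he⟩ := hdpos
    rcases (hmem e v).mp (Finset.mem_filter.mp he).2 with h | h
    · exact Finset.mem_union_left _ (Finset.mem_image.mpr ⟨e, Finset.mem_univ e, h.symm⟩)
    · exact Finset.mem_union_right _ (Finset.mem_image.mpr ⟨e, Finset.mem_univ e, h.symm⟩)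
  -- Hall's theorem gives a system of distinct bipartite edges, |F v| of them at each v
  have hall : ∀ s : Finset (Σ v : V, Fin ((F v).card)),
      s.card ≤ (s.biUnion (fun x => NB x.1)).card := by
    intro s
    set W : Finset V := s.image Sigma.fst with hW_def
    have h1 : s.card ≤ ∑ v ∈ W, (F v).card := by
      have hsub : s ⊆ W.sigma (fun v => (Finset.univ : Finset (Fin ((F v).card)))) := by
        intro x hx
        rw [Finset.mem_sigma]
        exact ⟨Finset.mem_image_of_mem _ hx, Finset.mem_univ _⟩
      calc s.card ≤ (W.sigma (fun v => (Finset.univ : Finset (Fin ((F v).card))))).card :=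
            Finset.card_le_card hsub
        _ = ∑ v ∈ W, (Finset.univ : Finset (Fin ((F v).card))).card := Finset.card_sigma _ _
        _ = ∑ v ∈ W, (F v).card := by simp
    have hB : s.biUnion (fun x => NB x.1) = W.biUnion NB := by
      rw [hW_def, Finset.image_biUnion]
    rw [hB]
    set B : Finset E := W.biUnion NB with hB_def
    have hcount : ∑ v ∈ W, (NB v).card ≤ 2 * B.card := by
      have hNW : ∀ v ∈ W, (NB v).card = ∑ e ∈ B, (if e ∈ NB v then 1 else 0) := by
        intro v hv
        have hsub : NB v ⊆ B := Finset.subset_biUnion_of_mem NB hv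
        have : B.filter (fun e => e ∈ NB v) = NB v := by
          ext e
          simp only [Finset.mem_filter]
          exact ⟨fun h => h.2, fun h => ⟨hsub h, h⟩⟩
        conv_lhs => rw [← this]
        rw [Finset.card_filter]
      calc ∑ v ∈ W, (NB v).card = ∑ v ∈ W, ∑ e ∈ B, (if e ∈ NB v then 1 else 0) :=
            Finset.sum_congr rfl hNW
        _ = ∑ e ∈ B, ∑ v ∈ W, (if e ∈ NB v then 1 else 0) := Finset.sum_comm
        _ ≤ ∑ _e ∈ B, 2 := by
            refine Finset.sum_le_sum fun e _ => ?_
            rw [← Finset.card_filter]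
            have hsub2 : W.filter (fun v => e ∈ NB v) ⊆ {a e, b e} := by
              intro v hv
              have := ((hNBmem v e).mp (Finset.mem_filter.mp hv).2).2
              rcases (hmem e v).mp this with h | h
              · simp [h]
              · simp [h]
            calc (W.filter (fun v => e ∈ NB v)).card ≤ ({a e, b e} : Finset V).card :=
                  Finset.card_le_card hsub2
              _ ≤ 2 := Finset.card_insert_le _ _ |>.trans (by simp)
        _ = 2 * B.card := by rw [Finset.sum_const, smul_eq_mul, mul_comm]
    have h2 : ∑ v ∈ W, (F v).card ≤ B.card := by
      have hsum := Finset.sum_le_sum (fun v (_ : v ∈ W) => h2F v)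
      rw [← Finset.mul_sum] at hsum
      omega
    exact h1.trans h2
  obtain ⟨ff, hffinj, hffmem⟩ :=
    (Finset.all_card_le_biUnion_card_iff_exists_injective
      (fun x : Σ v : V, Fin ((F v).card) => NB x.1)).mp hall
  set Tv : V → Finset E := fun v =>
    (Finset.univ : Finset (Fin ((F v).card))).image (fun i => ff ⟨v, i⟩) with hTv_def
  have hTvcard : ∀ v, (Tv v).card = (F v).card := by
    intro v
    rw [hTv_def]
    rw [Finset.card_image_of_injective _ ?_, Finset.card_univ, Fintype.card_fin]
    intro i j hij
    have h := hffinj hij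
    exact eq_of_heq (Sigma.mk.inj_iff.mp h).2
  have hTvsub : ∀ v ∈ Vrel, Tv v ⊆ NB v := by
    intro v _ x hx
    obtain ⟨i, _, rfl⟩ := Finset.mem_image.mp hx
    exact hffmem ⟨v, i⟩
  have hTvdisj : ∀ u ∈ Vrel, ∀ v ∈ Vrel, u ≠ v → Disjoint (Tv u) (Tv v) := by
    intro u _ v _ huv
    rw [Finset.disjoint_left]
    intro x hxu hxv
    obtain ⟨i, _, hi⟩ := Finset.mem_image.mp hxu
    obtain ⟨j, _, hj⟩ := Finset.mem_image.mp hxv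
    have := hffinj (hi.trans hj.symm)
    exact huv (congrArg Sigma.fst this)
  set T : Finset E := Vrel.biUnion Tv with hT_def
  have hTcard : T.card = ∑ v ∈ Vrel, (F v).card := by
    rw [hT_def, Finset.card_biUnion hTvdisj]
    exact Finset.sum_congr rfl fun v _ => hTvcard v
  have hindT : Stmt7Aux.indd T = ∑ v ∈ Vrel, Stmt7Aux.indd (Tv v) :=
    Stmt7Aux.indd_sum_of_disjoint _ _ hTvdisj
  -- the polynomial
  set m : V → MvPolynomial E ℚ := fun v => ∑ e ∈ NB v, MvPolynomial.X e with hm_def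
  set lin : V → MvPolynomial E ℚ := fun v => if c v then m v else - m v with hlin_def
  set cst : V → ℚ := fun v => ((EH.filter (fun e => a e = v)).card : ℚ)
    + (if c v then 0 else ((NB v).card : ℚ)) with hcst_def
  set Sg : Finset ((_ : V) × ℕ) := Vrel.sigma (fun v => F v) with hSg_def
  set fac : ((_ : V) × ℕ) → MvPolynomial E ℚ :=
    fun q => lin q.1 + MvPolynomial.C (cst q.1 - (q.2 : ℚ)) with hfac_def
  set f : MvPolynomial E ℚ := ∏ q ∈ Sg, fac q with hf_def
  have hSgcard : Sg.card = T.card := by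
    rw [hSg_def, Finset.card_sigma, hTcard]
  have hdeglin : ∀ v, (lin v).totalDegree ≤ 1 := by
    intro v
    have hdm : (m v).totalDegree ≤ 1 := by
      simp only [hm_def]
      refine (MvPolynomial.totalDegree_finset_sum _ _).trans ?_
      refine Finset.sup_le fun e _ => ?_
      rw [MvPolynomial.totalDegree_X]
    simp only [hlin_def]
    by_cases hcv : c v
    · rw [if_pos hcv]
      exact hdm
    · rw [if_neg hcv]
      rw [MvPolynomial.totalDegree_neg]
      exact hdm
  have hdegfac : ∀ q, (fac q).totalDegree ≤ 1 := by
    intro q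
    rw [hfac_def]
    refine (MvPolynomial.totalDegree_add _ _).trans ?_
    rw [MvPolynomial.totalDegree_C]
    exact max_le (hdeglin q.1) (Nat.zero_le 1)
  have hdegf : f.totalDegree ≤ T.card := by
    rw [hf_def]
    refine (MvPolynomial.totalDegree_finset_prod _ _).trans ?_
    calc ∑ q ∈ Sg, (fac q).totalDegree ≤ ∑ _q ∈ Sg, 1 :=
          Finset.sum_le_sum fun q _ => hdegfac q
      _ = Sg.card := by simp
      _ = T.card := hSgcard
  -- the coefficient of the multilinear monomial on T is nonzero
  have hcoeff : MvPolynomial.coeff (Stmt7Aux.indd T) f ≠ 0 := by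
    have hexp : f = ∑ K ∈ Sg.powerset,
        (∏ q ∈ K, lin q.1) * ∏ q ∈ Sg \ K, MvPolynomial.C (cst q.1 - (q.2 : ℚ)) := by
      rw [hf_def, hfac_def]
      exact Finset.prod_add _ _ _
    rw [hexp, MvPolynomial.coeff_sum]
    have hkill : ∀ K ∈ Sg.powerset, K ≠ Sg → MvPolynomial.coeff (Stmt7Aux.indd T)
        ((∏ q ∈ K, lin q.1) * ∏ q ∈ Sg \ K, MvPolynomial.C (cst q.1 - (q.2 : ℚ))) = 0 := by
      intro K hK hKne
      apply MvPolynomial.coeff_eq_zero_of_totalDegree_lt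
      rw [Stmt7Aux.indd_degree]
      have hKlt : K.card < Sg.card :=
        Finset.card_lt_card (Finset.ssubset_iff_subset_ne.mpr ⟨Finset.mem_powerset.mp hK, hKne⟩)
      have hd1 : (∏ q ∈ K, lin q.1).totalDegree ≤ K.card := by
        refine (MvPolynomial.totalDegree_finset_prod _ _).trans ?_
        calc ∑ q ∈ K, (lin q.1).totalDegree ≤ ∑ _q ∈ K, 1 :=
              Finset.sum_le_sum fun q _ => hdeglin q.1
          _ = K.card := by simp
      have hd2 : (∏ q ∈ Sg \ K, MvPolynomial.C (cst q.1 - (q.2 : ℚ))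
          : MvPolynomial E ℚ).totalDegree = 0 := by
        rw [← map_prod]
        exact MvPolynomial.totalDegree_C _
      calc ((∏ q ∈ K, lin q.1) * ∏ q ∈ Sg \ K,
            MvPolynomial.C (cst q.1 - (q.2 : ℚ))).totalDegree
          ≤ (∏ q ∈ K, lin q.1).totalDegree + (∏ q ∈ Sg \ K, MvPolynomial.C (cst q.1 - (q.2 : ℚ))
            : MvPolynomial E ℚ).totalDegree := MvPolynomial.totalDegree_mul _ _
        _ ≤ K.card + 0 := by rw [hd2]; exact Nat.add_le_add hd1 le_rfl
        _ < Sg.card := by omega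
        _ = T.card := hSgcard
    rw [Finset.sum_eq_single_of_mem Sg (Finset.mem_powerset_self Sg) hkill]
    rw [Finset.sdiff_self, Finset.prod_empty, mul_one]
    have hps : (∏ q ∈ Sg, lin q.1) = ∏ v ∈ Vrel, (lin v) ^ ((F v).card) := by
      rw [hSg_def, Finset.prod_sigma]
      refine Finset.prod_congr rfl fun v _ => ?_
      show (∏ _s ∈ F v, lin v) = lin v ^ (F v).card
      exact Finset.prod_const _
    rw [hps]
    have hlinpow : ∀ v ∈ Vrel, (lin v) ^ ((F v).card)
        = MvPolynomial.C (if c v then (1 : ℚ) else (-1) ^ ((F v).card))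
          * (m v) ^ ((F v).card) := by
      intro v _
      by_cases hcv : c v
      · simp only [hlin_def, if_pos hcv]
        rw [map_one, one_mul]
      · simp only [hlin_def, if_neg hcv]
        rw [neg_pow]
        congr 1
        rw [map_pow, map_neg, map_one]
    rw [Finset.prod_congr rfl hlinpow, Finset.prod_mul_distrib, ← map_prod]
    rw [MvPolynomial.coeff_C_mul]
    have heps_ne : (∏ v ∈ Vrel, (if c v then (1 : ℚ) else (-1) ^ ((F v).card))) ≠ 0 := by
      rw [Finset.prod_ne_zero_iff]
      intro v _
      split
      · norm_num
      · exact pow_ne_zero _ (by norm_num)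
    have hpos : 0 < MvPolynomial.coeff (Stmt7Aux.indd T) (∏ v ∈ Vrel, (m v) ^ ((F v).card)) := by
      have hrw : (∏ v ∈ Vrel, (m v) ^ ((F v).card))
          = ∏ v ∈ Vrel, (∑ e ∈ NB v, (MvPolynomial.X e : MvPolynomial E ℚ)) ^ ((Tv v).card) := by
        refine Finset.prod_congr rfl fun v _ => ?_
        rw [hTvcard v, hm_def]
      rw [hrw, hindT]
      exact Stmt7Aux.coeff_prod_pos Vrel NB Tv hTvsub hTvdisj
    exact mul_ne_zero heps_ne (ne_of_gt hpos)
  -- extract a good evaluation point from the finite-difference formula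
  obtain ⟨U, hUT, hUne⟩ : ∃ U ∈ T.powerset,
      MvPolynomial.eval (fun e => if e ∈ U then (1 : ℚ) else 0) f ≠ 0 := by
    by_contra hcon
    push_neg at hcon
    have hdc := Stmt7Aux.diff_coeff T f hdegf
    rw [Finset.sum_eq_zero (fun U hU => by rw [hcon U hU, mul_zero])] at hdc
    exact hcoeff hdc.symm
  set sval : E → ℚ := fun e => if e ∈ U then (1 : ℚ) else 0 with hsval_def
  -- define the orientation
  set tl : E → V := fun e => if e ∈ EH ∨ e ∈ U then a e else b e with htl_def
  set hdf : E → V := fun e => if e ∈ EH ∨ e ∈ U then b e else a e with hhdf_def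
  have hcons : ∀ e, G.ends e = s(tl e, hdf e) := by
    intro e
    rw [htl_def, hhdf_def]
    by_cases h : e ∈ EH ∨ e ∈ U
    · simp only [h, if_true]
      exact hp1 e
    · simp only [h, if_false]
      rw [hp1 e]
      exact Sym2.eq_swap
  refine ⟨⟨tl, hdf, hcons⟩, ?_⟩
  intro v hmemF
  -- suppose the out-degree of v is a forbidden value; derive a contradiction
  set od : ℕ := (Finset.univ.filter fun e => tl e = v).card with hod_def
  have hodeq : (Multigraph.Orientation.mk tl hdf hcons).outDeg v = od := rfl
  rw [hodeq] at hmemF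
  have hvVrel : v ∈ Vrel := hVrel v ⟨od, hmemF⟩
  have hq : (⟨v, od⟩ : (_ : V) × ℕ) ∈ Sg := by
    rw [hSg_def]
    exact Finset.mem_sigma.mpr ⟨hvVrel, hmemF⟩
  have hfac0 : MvPolynomial.eval sval (fac ⟨v, od⟩) ≠ 0 := by
    have hprod : MvPolynomial.eval sval f = ∏ q ∈ Sg, MvPolynomial.eval sval (fac q) := by
      rw [hf_def, map_prod]
    rw [hprod] at hUne
    exact Finset.prod_ne_zero_iff.mp hUne ⟨v, od⟩ hq
  have heval_fac : MvPolynomial.eval sval (fac ⟨v, od⟩)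
      = MvPolynomial.eval sval (lin v) + (cst v - (od : ℚ)) := by
    simp only [hfac_def]
    rw [map_add, MvPolynomial.eval_C]
  have hevalm : MvPolynomial.eval sval (m v)
      = (((NB v).filter (fun e => e ∈ U)).card : ℚ) := by
    simp only [hm_def, map_sum]
    simp only [MvPolynomial.eval_X, hsval_def]
    exact Finset.sum_boole _ _
  -- split the out-degree into three parts
  have hsplit : od = (EH.filter (fun e => a e = v)).card
      + (Finset.univ.filter (fun e => e ∉ EH ∧ e ∈ U ∧ a e = v)).card
      + (Finset.univ.filter (fun e => e ∉ EH ∧ e ∉ U ∧ b e = v)).card := by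
    have hEHeq : EH.filter (fun e => a e = v)
        = Finset.univ.filter (fun e => e ∈ EH ∧ a e = v) := by
      ext e
      simp only [Finset.mem_filter, Finset.mem_univ, true_and]
    rw [hod_def, hEHeq, Finset.card_filter, Finset.card_filter, Finset.card_filter,
      Finset.card_filter, ← Finset.sum_add_distrib, ← Finset.sum_add_distrib]
    refine Finset.sum_congr rfl fun e _ => ?_
    rw [htl_def]
    by_cases he : e ∈ EH
    · by_cases hav : a e = v
      · simp [he, hav]
      · simp [he, hav]
    · by_cases heU : e ∈ U
      · by_cases hav : a e = v
        · simp [he, heU, hav]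
        · simp [he, heU, hav]
      · by_cases hbv : b e = v
        · by_cases hav : a e = v
          · exfalso
            exact hp2' e (hav.trans hbv.symm)
          · simp [he, heU, hav, hbv]
        · simp [he, heU, hbv]
  have hkey : MvPolynomial.eval sval (lin v) + cst v = (od : ℚ) := by
    by_cases hcv : c v
    · have h3zero : Finset.univ.filter (fun e => e ∉ EH ∧ e ∉ U ∧ b e = v) = ∅ := by
        rw [Finset.filter_eq_empty_iff]
        rintro e _ ⟨he, _, hbv⟩
        have := (hp3' e he).2
        rw [hbv] at this
        rw [this] at hcv
        simp at hcv
      have h2eq : Finset.univ.filter (fun e => e ∉ EH ∧ e ∈ U ∧ a e = v)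
          = (NB v).filter (fun e => e ∈ U) := by
        ext e
        simp only [Finset.mem_filter, Finset.mem_univ, true_and, hNBmem]
        constructor
        · rintro ⟨he, heU, hav⟩
          exact ⟨⟨he, (hmem e v).mpr (Or.inl hav.symm)⟩, heU⟩
        · rintro ⟨⟨he, hv⟩, heU⟩
          refine ⟨he, heU, ?_⟩
          rcases (hmem e v).mp hv with h | h
          · exact h.symm
          · exfalso
            have := (hp3' e he).2
            rw [← h] at this
            rw [this] at hcv
            simp at hcv
      simp only [hlin_def, if_pos hcv]
      rw [hevalm]
      simp only [hcst_def, if_pos hcv, add_zero]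
      rw [hsplit]
      rw [h3zero, h2eq]
      push_cast [Finset.card_empty]
      ring
    · have h2zero : Finset.univ.filter (fun e => e ∉ EH ∧ e ∈ U ∧ a e = v) = ∅ := by
        rw [Finset.filter_eq_empty_iff]
        rintro e _ ⟨he, _, hav⟩
        have := (hp3' e he).1
        rw [hav] at this
        exact hcv this
      have h3eq : Finset.univ.filter (fun e => e ∉ EH ∧ e ∉ U ∧ b e = v)
          = (NB v).filter (fun e => e ∉ U) := by
        ext e
        simp only [Finset.mem_filter, Finset.mem_univ, true_and, hNBmem]
        constructor
        · rintro ⟨he, heU, hbv⟩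
          exact ⟨⟨he, (hmem e v).mpr (Or.inr hbv.symm)⟩, heU⟩
        · rintro ⟨⟨he, hv⟩, heU⟩
          refine ⟨he, heU, ?_⟩
          rcases (hmem e v).mp hv with h | h
          · exfalso
            have := (hp3' e he).1
            rw [← h] at this
            exact hcv this
          · exact h.symm
      have hcards := Finset.card_filter_add_card_filter_not
        (s := NB v) (p := fun e => e ∈ U)
      simp only [hlin_def, if_neg hcv]
      rw [map_neg, hevalm]
      simp only [hcst_def, if_neg hcv]
      have hcast : (((NB v).filter (fun e => e ∈ U)).card : ℚ)
          + (((NB v).filter (fun e => ¬ e ∈ U)).card : ℚ) = ((NB v).card : ℚ) := by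
        exact_mod_cast hcards
      rw [hsplit, h2zero, h3eq]
      push_cast [Finset.card_empty]
      linarith
  apply hfac0
  rw [heval_fac, ← hkey]
  ring
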